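/- Let μ₁ ∈ ℝ, σ₁ > 0, σ_e ≥ 0, x₀ ∈ ℝ, and define v(x,t) = [x (t σ₁² + (1−t) σ_e²/2) − (x − μ₁)((1−t) + t σ_e²/2)] / (t(1−t) σ_e² + σ₁² t² + (1−t)²) and x(t) = μ₁ t + x₀ √(t(1−t) σ_e² + σ₁² t² + (1−t)²) for t ∈ [0,1]. Then x(0) = x₀, x(t) is differentiable on [0,1] and satisfies x'(t) = v(x(t), t) for all t ∈ [0,1], and x(1) = μ₁ + x₀ σ₁. In the limit σ_e → 0 these expressions reduce to the deterministic Gaussian-to-Gaussian vector field and trajectory with μ₀ = 0, σ₀ = 1. -/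

import Mathlib

open Real Filter

/-- Exact trajectory of the stochastic explicit flow-matching (probability-flow)
ODE from `N(0,1)` to `N(μ₁,σ₁²)` with Brownian-bridge noise of intensity
`σ_e √(t(1−t))`: `x(t) = μ₁ t + x₀ √(t(1−t)σ_e² + σ₁² t² + (1−t)²)` starts at
`x₀`, solves `x' = v(x,t)` on `[0,1]`, ends at `μ₁ + x₀ σ₁`, and as `σ_e → 0`
the field and trajectory reduce to the deterministic Gaussian-to-Gaussian ones
(with `μ₀ = 0`, `σ₀ = 1`). -/
theorem gaussian_stochastic_flow_matching_trajectory (μ₁ σ₁ σe x₀ : ℝ)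
    (hσ₁ : 0 < σ₁) (hσe : 0 ≤ σe)
    (v : ℝ → ℝ → ℝ)
    (hv : ∀ y t, v y t =
      (y * (t * σ₁ ^ 2 + (1 - t) * σe ^ 2 / 2) -
          (y - μ₁) * ((1 - t) + t * σe ^ 2 / 2)) /
        (t * (1 - t) * σe ^ 2 + σ₁ ^ 2 * t ^ 2 + (1 - t) ^ 2))
    (x : ℝ → ℝ)
    (hx : ∀ t, x t = μ₁ * t +
      x₀ * Real.sqrt (t * (1 - t) * σe ^ 2 + σ₁ ^ 2 * t ^ 2 + (1 - t) ^ 2)) :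
    x 0 = x₀ ∧
    (∀ t ∈ Set.Icc (0 : ℝ) 1, HasDerivAt x (v (x t) t) t) ∧
    x 1 = μ₁ + x₀ * σ₁ ∧
    (∀ y : ℝ, ∀ t ∈ Set.Icc (0 : ℝ) 1,
      Tendsto (fun s : ℝ =>
          (y * (t * σ₁ ^ 2 + (1 - t) * s ^ 2 / 2) -
              (y - μ₁) * ((1 - t) + t * s ^ 2 / 2)) /
            (t * (1 - t) * s ^ 2 + σ₁ ^ 2 * t ^ 2 + (1 - t) ^ 2))
        (nhds 0)
        (nhds ((σ₁ ^ 2 * t * y - (1 - t) * (y - μ₁)) /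
          (σ₁ ^ 2 * t ^ 2 + (1 - t) ^ 2))) ∧
      Tendsto (fun s : ℝ =>
          μ₁ * t + x₀ * Real.sqrt (t * (1 - t) * s ^ 2 + σ₁ ^ 2 * t ^ 2 + (1 - t) ^ 2))
        (nhds 0)
        (nhds (μ₁ * t + x₀ * Real.sqrt (σ₁ ^ 2 * t ^ 2 + (1 - t) ^ 2)))) := by
  have key : ∀ t : ℝ, 0 ≤ t → t ≤ 1 → 0 < σ₁ ^ 2 * t ^ 2 + (1 - t) ^ 2 := by
    intro t h0 h1
    rcases lt_or_eq_of_le h1 with h | h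
    · have h2 : 0 < (1 - t) ^ 2 := pow_pos (by linarith) 2
      have h3 : 0 ≤ σ₁ ^ 2 * t ^ 2 := by positivity
      linarith
    · subst h
      norm_num
      positivity
  have hD0 : ∀ t : ℝ, 0 ≤ t → t ≤ 1 →
      0 < t * (1 - t) * σe ^ 2 + σ₁ ^ 2 * t ^ 2 + (1 - t) ^ 2 := by
    intro t h0 h1
    have h2 : 0 ≤ t * (1 - t) * σe ^ 2 :=
      mul_nonneg (mul_nonneg h0 (by linarith)) (sq_nonneg σe)
    have := key t h0 h1
    linarith
  refine ⟨by rw [hx]; simp, ?_, by rw [hx]; rw [show (1:ℝ)*(1-1)*σe^2 + σ₁^2*1^2 + (1-1)^2 = σ₁^2 by ring]; rw [Real.sqrt_sq hσ₁.le]; ring, ?_⟩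
  · intro t ht
    obtain ⟨h0, h1⟩ := ht
    have hD := hD0 t h0 h1
    set s := Real.sqrt (t * (1 - t) * σe ^ 2 + σ₁ ^ 2 * t ^ 2 + (1 - t) ^ 2) with hs_def
    have hs : 0 < s := Real.sqrt_pos.mpr hD
    have hs2 : s ^ 2 = t * (1 - t) * σe ^ 2 + σ₁ ^ 2 * t ^ 2 + (1 - t) ^ 2 :=
      Real.sq_sqrt hD.le
    have hDder : HasDerivAt (fun u : ℝ => u * (1 - u) * σe ^ 2 + σ₁ ^ 2 * u ^ 2 + (1 - u) ^ 2)
        ((1 - 2 * t) * σe ^ 2 + σ₁ ^ 2 * (2 * t) - 2 * (1 - t)) t := by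
      have h1' : HasDerivAt (fun u : ℝ => 1 - u) (-1) t := by
        simpa using (hasDerivAt_id t).const_sub (1:ℝ)
      have ha : HasDerivAt (fun u : ℝ => u * (1 - u) * σe ^ 2)
          ((1 * (1 - t) + t * (-1)) * σe ^ 2) t :=
        ((hasDerivAt_id t).mul h1').mul_const _
      have hb : HasDerivAt (fun u : ℝ => σ₁ ^ 2 * u ^ 2) (σ₁ ^ 2 * (2 * t ^ 1)) t := by
        simpa using (hasDerivAt_pow 2 t).const_mul (σ₁ ^ 2)
      have hc : HasDerivAt (fun u : ℝ => (1 - u) ^ 2) ((2 : ℕ) * (1 - t) ^ 1 * (-1)) t :=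
        h1'.pow 2
      refine HasDerivAt.congr_deriv ((ha.add hb).add hc) ?_
      push_cast
      ring
    have hsqrt : HasDerivAt (fun u : ℝ => Real.sqrt (u * (1 - u) * σe ^ 2 + σ₁ ^ 2 * u ^ 2 + (1 - u) ^ 2))
        (((1 - 2 * t) * σe ^ 2 + σ₁ ^ 2 * (2 * t) - 2 * (1 - t)) / (2 * s)) t :=
      hDder.sqrt hD.ne'
    have hxfun : x = fun u => μ₁ * u +
        x₀ * Real.sqrt (u * (1 - u) * σe ^ 2 + σ₁ ^ 2 * u ^ 2 + (1 - u) ^ 2) := funext hx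
    have hder : HasDerivAt (fun u : ℝ => μ₁ * u +
        x₀ * Real.sqrt (u * (1 - u) * σe ^ 2 + σ₁ ^ 2 * u ^ 2 + (1 - u) ^ 2))
        (μ₁ * 1 + x₀ * (((1 - 2 * t) * σe ^ 2 + σ₁ ^ 2 * (2 * t) - 2 * (1 - t)) / (2 * s))) t :=
      ((hasDerivAt_id t).const_mul μ₁).add (hsqrt.const_mul x₀)
    have heq : v (x t) t =
        μ₁ * 1 + x₀ * (((1 - 2 * t) * σe ^ 2 + σ₁ ^ 2 * (2 * t) - 2 * (1 - t)) / (2 * s)) := by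
      rw [hv, hx, ← hs_def, ← hs2]
      field_simp
      ring_nf
      linear_combination (-2 * μ₁) * hs2
    rw [heq, hxfun]
    exact hder
  · intro y t ht
    obtain ⟨h0, h1⟩ := ht
    have hden : σ₁ ^ 2 * t ^ 2 + (1 - t) ^ 2 ≠ 0 := (key t h0 h1).ne'
    constructor
    · have hc : ContinuousAt (fun s : ℝ =>
          (y * (t * σ₁ ^ 2 + (1 - t) * s ^ 2 / 2) -
              (y - μ₁) * ((1 - t) + t * s ^ 2 / 2)) /
            (t * (1 - t) * s ^ 2 + σ₁ ^ 2 * t ^ 2 + (1 - t) ^ 2)) 0 := by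
        apply ContinuousAt.div (by fun_prop) (by fun_prop)
        simpa using hden
      have hval : (y * (t * σ₁ ^ 2 + (1 - t) * (0:ℝ) ^ 2 / 2) -
              (y - μ₁) * ((1 - t) + t * (0:ℝ) ^ 2 / 2)) /
            (t * (1 - t) * (0:ℝ) ^ 2 + σ₁ ^ 2 * t ^ 2 + (1 - t) ^ 2)
          = (σ₁ ^ 2 * t * y - (1 - t) * (y - μ₁)) / (σ₁ ^ 2 * t ^ 2 + (1 - t) ^ 2) := by
        norm_num
        ring_nf
      exact hval ▸ hc.tendsto
    · have hc : ContinuousAt (fun s : ℝ =>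
          μ₁ * t + x₀ * Real.sqrt (t * (1 - t) * s ^ 2 + σ₁ ^ 2 * t ^ 2 + (1 - t) ^ 2)) 0 := by
        fun_prop
      have hval : μ₁ * t + x₀ * Real.sqrt (t * (1 - t) * (0:ℝ) ^ 2 + σ₁ ^ 2 * t ^ 2 + (1 - t) ^ 2)
          = μ₁ * t + x₀ * Real.sqrt (σ₁ ^ 2 * t ^ 2 + (1 - t) ^ 2) := by
        norm_num
      exact hval ▸ hc.tendsto
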